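/- Marginal formula for circle-structured costs (Theorem 4.2): let (V, E) be the circle graph on V = [K] with edges {k, k+1 mod K}, and let the cost decouple along its edges. For entrywise positive vectors φ^k ∈ ℝ^{n_k}, define matrices α^{(ℓ,t)} ∈ ℝ^{n_ℓ×n_t} recursively (indices mod K) by α^{(ℓ,t)} = 𝒦^{(ℓ,t)} if d(ℓ,t) = 1, and α^{(ℓ,t)} = 𝒦^{(ℓ,ℓ+1)} (φ^{ℓ+1} ⊙ α^{(ℓ+1,t)}) otherwise, where φ^{ℓ+1} ⊙ A scales the rows of A. Then for every node k ∈ [K] and index i ∈ [n_k], the k-th marginal satisfies [P_k(𝒦 ⊙ Φ)]_i = φ^k_i · Σ_{j=1}^{n_{k+1}} 𝒦^{(k,k+1)}_{i,j} φ^{k+1}_j α^{(k+1,k)}_{j,i}. -/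

import Mathlib

namespace CM

open Fin.NatCast

variable {K : ℕ} [NeZero K]

@[reducible] def vtx (k : Fin K) : ℕ → Fin K
  | 0 => k
  | m+1 => vtx k m + 1

lemma vtx_eq (k : Fin K) (m : ℕ) : vtx k m = k + (m : Fin K) := by
  induction m with
  | zero => simp [vtx]
  | succ m ih =>
    show vtx k m + 1 = _
    rw [ih]; push_cast; exact add_assoc _ _ _

lemma vtx_K (k : Fin K) : vtx k K = k := by
  rw [vtx_eq]; simp

section

variable {d : ℕ} (n : Fin K → ℕ)
  (x : ∀ k, Fin (n k) → EuclideanSpace ℝ (Fin d)) (η : ℝ) (φ : ∀ k, Fin (n k) → ℝ)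
  (k : Fin K) (i : Fin (n k))

noncomputable def G (r : ℕ) (a : Fin (n (vtx k r))) (b : Fin (n (vtx k r + 1))) : ℝ :=
  Real.exp (-‖x (vtx k r) a - x (vtx k r + 1) b‖ ^ 2 / η) * φ (vtx k r) a

noncomputable def A : (t : ℕ) → Fin (n (vtx k t)) → ℝ
  | 0, a => if a = i then 1 else 0
  | t+1, b => ∑ c, A t c * G n x η φ k t c b

noncomputable def B : (t m : ℕ) → Fin (n (vtx k m)) → ℝ
  | 0, m, a => if h : vtx k m = k then (if Fin.cast (congrArg n h) a = i then 1 else 0) else 0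
  | t+1, m, a => ∑ c, G n x η φ k m a c * B t (m+1) c

lemma L1 : ∀ (t : ℕ) (b : Fin (n (vtx k t))),
    (∑ y : (∀ r : Fin t, Fin (n (vtx k r.1))),
      (if (Fin.snoc (α := fun r : Fin (t+1) => Fin (n (vtx k r.1))) y b) ⟨0, t.succ_pos⟩ = i
        then 1 else 0)
      * ∏ r : Fin t,
          G n x η φ k r.1
            ((Fin.snoc (α := fun r : Fin (t+1) => Fin (n (vtx k r.1))) y b) r.castSucc)
            ((Fin.snoc (α := fun r : Fin (t+1) => Fin (n (vtx k r.1))) y b) r.succ))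
    = A n x η φ k i t b := by
  intro t
  induction t with
  | zero =>
    intro b
    rw [Fintype.sum_unique]
    simp [A, Fin.snoc]
  | succ t ih =>
    intro b
    have split : ∀ F : (∀ r : Fin (t+1), Fin (n (vtx k r.1))) → ℝ,
        (∑ y, F y) = ∑ c : Fin (n (vtx k t)), ∑ z : (∀ r : Fin t, Fin (n (vtx k r.1))),
          F (Fin.snoc (α := fun r : Fin (t+1) => Fin (n (vtx k r.1))) z c) := by
      intro F
      rw [← Equiv.sum_comp (Fin.snocEquiv (fun r : Fin (t+1) => Fin (n (vtx k r.1)))) F,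
        Fintype.sum_prod_type]
      rfl
    rw [split]
    rw [show A n x η φ k i (t+1) b = ∑ c, A n x η φ k i t c * G n x η φ k t c b from rfl]
    refine Finset.sum_congr rfl fun c _ => ?_
    rw [← ih c, Finset.sum_mul]
    refine Finset.sum_congr rfl fun z _ => ?_
    have hpin : (Fin.snoc (α := fun r : Fin (t+2) => Fin (n (vtx k r.1)))
        (Fin.snoc (α := fun r : Fin (t+1) => Fin (n (vtx k r.1))) z c) b) ⟨0, (t+1).succ_pos⟩
        = (Fin.snoc (α := fun r : Fin (t+1) => Fin (n (vtx k r.1))) z c) ⟨0, t.succ_pos⟩ :=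
      Fin.snoc_castSucc (α := fun r : Fin (t+2) => Fin (n (vtx k r.1))) b
        (Fin.snoc (α := fun r : Fin (t+1) => Fin (n (vtx k r.1))) z c) ⟨0, t.succ_pos⟩
    rw [Fin.prod_univ_castSucc, hpin]
    simp only [Fin.snoc_castSucc, Fin.snoc_last, Fin.succ_castSucc, Fin.succ_last,
      Fin.val_last, Fin.coe_castSucc]
    ring

lemma jcast {t t' : Fin K} (h : t = t') (jj : ∀ s, Fin (n s)) :
    Fin.cast (congrArg n h) (jj t) = jj t' := by subst h; rfl

lemma acast (α : ∀ (ℓ t : Fin K), Fin (n ℓ) → Fin (n t) → ℝ) {ℓ t t' : Fin K}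
    (h : t = t') (a : Fin (n ℓ)) (b : Fin (n t)) :
    α ℓ t' a (Fin.cast (congrArg n h) b) = α ℓ t a b := by subst h; rfl

lemma B1 (α : ∀ (ℓ t : Fin K), Fin (n ℓ) → Fin (n t) → ℝ)
    (hα1 : ∀ (ℓ : Fin K) (a : Fin (n ℓ)) (b : Fin (n (ℓ + 1))),
      α ℓ (ℓ + 1) a b = Real.exp (-‖x ℓ a - x (ℓ + 1) b‖ ^ 2 / η))
    (hα2 : ∀ (ℓ t : Fin K), t ≠ ℓ + 1 → t ≠ ℓ →
      ∀ (a : Fin (n ℓ)) (b : Fin (n t)),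
      α ℓ t a b = ∑ c : Fin (n (ℓ + 1)),
        Real.exp (-‖x ℓ a - x (ℓ + 1) c‖ ^ 2 / η) * (φ (ℓ + 1) c * α (ℓ + 1) t c b)) :
    ∀ t m, t + m = K → 1 ≤ t → 1 ≤ m → ∀ a : Fin (n (vtx k m)),
      B n x η φ k i t m a = φ (vtx k m) a * α (vtx k m) k a i := by
  intro t
  induction t with
  | zero => omega
  | succ t ih =>
    intro m hsum _ hm1 a
    by_cases ht : t = 0
    · subst ht
      have hmK : m + 1 = K := by omega
      have hmk : vtx k (m+1) = k := by rw [hmK, vtx_K]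
      have pfm := congrArg n hmk
      set j₀ : Fin (n (vtx k (m+1))) := Fin.cast (congrArg n hmk.symm) i with hj₀
      have hji : Fin.cast pfm j₀ = i := by
        apply Fin.ext; simp [hj₀]
      have e1 : α (vtx k m) k a i = Real.exp (-‖x (vtx k m) a - x (vtx k m + 1) j₀‖ ^ 2 / η) := by
        rw [← hji, acast n α hmk a j₀]
        exact hα1 (vtx k m) a j₀
      show (∑ c, G n x η φ k m a c * B n x η φ k i 0 (m+1) c) = _
      have hB0 : ∀ c : Fin (n (vtx k (m+1))),
          B n x η φ k i 0 (m+1) c = if c = j₀ then 1 else 0 := by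
        intro c
        show (if h : vtx k (m+1) = k then (if Fin.cast (congrArg n h) c = i then (1:ℝ) else 0)
          else 0) = _
        rw [dif_pos hmk]
        congr 1
        simp only [eq_iff_iff]
        constructor
        · intro h; apply Fin.ext
          have : (Fin.cast (congrArg n hmk) c).val = i.val := by rw [h]
          simpa [hj₀] using this
        · intro h; subst h; exact hji
      simp only [hB0, mul_ite, mul_one, mul_zero, Finset.sum_ite_eq', Finset.mem_univ, if_true]
      rw [e1]
      simp only [G]; ring
    · have h1 : k ≠ vtx k m := by
        rw [vtx_eq]
        intro h
        have hm0 : (m : Fin K) = 0 := by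
          have := left_eq_add.mp h
          exact this
        rw [Fin.natCast_eq_zero] at hm0
        have := Nat.le_of_dvd (by omega) hm0
        omega
      have h2 : k ≠ vtx k m + 1 := by
        have : vtx k m + 1 = vtx k (m+1) := rfl
        rw [this, vtx_eq]
        intro h
        have hm0 : ((m+1 : ℕ) : Fin K) = 0 := left_eq_add.mp h
        rw [Fin.natCast_eq_zero] at hm0
        have := Nat.le_of_dvd (by omega) hm0
        omega
      show (∑ c, G n x η φ k m a c * B n x η φ k i t (m+1) c) = _
      simp only [ih (m+1) (by omega) (by omega) (by omega)]
      rw [hα2 (vtx k m) k h2 h1 a i, Finset.mul_sum]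
      refine Finset.sum_congr rfl fun c _ => ?_
      simp only [G, vtx]
      ring

lemma Qiter : ∀ t m, t + m = K →
    (∑ c, A n x η φ k i m c * B n x η φ k i t m c)
      = ∑ c, A n x η φ k i K c * B n x η φ k i 0 K c := by
  intro t
  induction t with
  | zero =>
    intro m hm
    obtain rfl : m = K := by omega
    rfl
  | succ t ih =>
    intro m hm
    have step : (∑ c, A n x η φ k i m c * B n x η φ k i (t+1) m c)
        = ∑ c, A n x η φ k i (m+1) c * B n x η φ k i t (m+1) c := by
      show (∑ c, A n x η φ k i m c * (∑ c', G n x η φ k m c c' * B n x η φ k i t (m+1) c'))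
        = ∑ c', (∑ c, A n x η φ k i m c * G n x η φ k m c c') * B n x η φ k i t (m+1) c'
      simp only [Finset.mul_sum, Finset.sum_mul]
      rw [Finset.sum_comm]
      exact Finset.sum_congr rfl fun c' _ => Finset.sum_congr rfl fun c _ => by ring
    rw [step]
    exact ih (m+1) (by omega)

end

end CM

open CM in
theorem circle_marginal_formula
    (K d : ℕ) [NeZero K] (hK : 3 ≤ K) (n : Fin K → ℕ)
    (x : ∀ k, Fin (n k) → EuclideanSpace ℝ (Fin d))
    (η : ℝ) (hη : 0 < η)
    (φ : ∀ k, Fin (n k) → ℝ) (hφ : ∀ k j, 0 < φ k j)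
    (α : ∀ (ℓ t : Fin K), Fin (n ℓ) → Fin (n t) → ℝ)
    (hα1 : ∀ (ℓ : Fin K) (a : Fin (n ℓ)) (b : Fin (n (ℓ + 1))),
      α ℓ (ℓ + 1) a b = Real.exp (-‖x ℓ a - x (ℓ + 1) b‖ ^ 2 / η))
    (hα2 : ∀ (ℓ t : Fin K), t ≠ ℓ + 1 → t ≠ ℓ →
      ∀ (a : Fin (n ℓ)) (b : Fin (n t)),
      α ℓ t a b = ∑ c : Fin (n (ℓ + 1)),
        Real.exp (-‖x ℓ a - x (ℓ + 1) c‖ ^ 2 / η) * (φ (ℓ + 1) c * α (ℓ + 1) t c b)) :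
    ∀ (k : Fin K) (i : Fin (n k)),
      (∑ jj : ∀ t, Fin (n t), if jj k = i then
          Real.exp (-(∑ ℓ, ‖x ℓ (jj ℓ) - x (ℓ + 1) (jj (ℓ + 1))‖ ^ 2) / η)
            * ∏ ℓ, φ ℓ (jj ℓ)
        else 0)
      = φ k i * ∑ j : Fin (n (k + 1)),
          Real.exp (-‖x k i - x (k + 1) j‖ ^ 2 / η) * φ (k + 1) j * α (k + 1) k j i := by
  intro k i
  have hK0 : vtx k K = k := vtx_K k
  have li : ∀ t : Fin K, vtx k ((t - k : Fin K) : ℕ) = t := by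
    intro t; rw [vtx_eq, Fin.cast_val_eq_self]; abel
  have ri : ∀ r : Fin K, vtx k (r : ℕ) - k = r := by
    intro r; rw [vtx_eq, Fin.cast_val_eq_self]; abel
  have step1 : (∑ jj : ∀ t, Fin (n t), if jj k = i then
          Real.exp (-(∑ ℓ, ‖x ℓ (jj ℓ) - x (ℓ + 1) (jj (ℓ + 1))‖ ^ 2) / η)
            * ∏ ℓ, φ ℓ (jj ℓ)
        else 0)
      = ∑ y : (∀ r : Fin K, Fin (n (vtx k r.1))),
          (if (Fin.snoc (α := fun r : Fin (K+1) => Fin (n (vtx k r.1))) y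
              (Fin.cast (congrArg n hK0.symm) i)) ⟨0, K.succ_pos⟩ = i then 1 else 0)
          * ∏ r : Fin K, G n x η φ k r.1
              ((Fin.snoc (α := fun r' : Fin (K+1) => Fin (n (vtx k r'.1))) y
                (Fin.cast (congrArg n hK0.symm) i)) r.castSucc)
              ((Fin.snoc (α := fun r' : Fin (K+1) => Fin (n (vtx k r'.1))) y
                (Fin.cast (congrArg n hK0.symm) i)) r.succ) := by
    refine Fintype.sum_equiv
      (Equiv.piCongrLeft' (fun s => Fin (n s)) ⟨fun t => t - k, fun r => vtx k r.1, li, ri⟩)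
      _ _ ?_
    intro jj
    have hWpin : (Fin.snoc (α := fun r' : Fin (K+1) => Fin (n (vtx k r'.1)))
        (fun r : Fin K => jj (vtx k r.1)) (Fin.cast (congrArg n hK0.symm) i))
          ⟨0, K.succ_pos⟩ = jj k :=
      Fin.snoc_castSucc (α := fun r' : Fin (K+1) => Fin (n (vtx k r'.1)))
        (Fin.cast (congrArg n hK0.symm) i) (fun r : Fin K => jj (vtx k r.1)) ⟨0, Fin.pos k⟩
    show _ = (if (Fin.snoc (α := fun r' : Fin (K+1) => Fin (n (vtx k r'.1)))
        (fun r : Fin K => jj (vtx k r.1)) (Fin.cast (congrArg n hK0.symm) i))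
          ⟨0, K.succ_pos⟩ = i then 1 else 0)
      * ∏ r : Fin K, G n x η φ k r.1
          ((Fin.snoc (α := fun r' : Fin (K+1) => Fin (n (vtx k r'.1)))
            (fun r' : Fin K => jj (vtx k r'.1)) (Fin.cast (congrArg n hK0.symm) i)) r.castSucc)
          ((Fin.snoc (α := fun r' : Fin (K+1) => Fin (n (vtx k r'.1)))
            (fun r' : Fin K => jj (vtx k r'.1)) (Fin.cast (congrArg n hK0.symm) i)) r.succ)
    rw [hWpin]
    by_cases hc : jj k = i
    · rw [if_pos hc, if_pos hc, one_mul]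
      have hW : (Fin.snoc (α := fun r' : Fin (K+1) => Fin (n (vtx k r'.1)))
          (fun r : Fin K => jj (vtx k r.1)) (Fin.cast (congrArg n hK0.symm) i))
          = fun s : Fin (K+1) => jj (vtx k s.1) := by
        funext s
        induction s using Fin.lastCases with
        | last =>
          rw [Fin.snoc_last, ← hc]
          exact jcast n hK0.symm jj
        | cast r =>
          rw [Fin.snoc_castSucc]
          rfl
      rw [hW]
      rw [show (-(∑ ℓ, ‖x ℓ (jj ℓ) - x (ℓ + 1) (jj (ℓ + 1))‖ ^ 2) / η)
          = ∑ ℓ, -‖x ℓ (jj ℓ) - x (ℓ + 1) (jj (ℓ + 1))‖ ^ 2 / η from by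
        rw [← Finset.sum_neg_distrib, Finset.sum_div]]
      rw [Real.exp_sum, ← Finset.prod_mul_distrib]
      exact (Fintype.prod_equiv
        ⟨fun r : Fin K => vtx k r.1, fun t => t - k, ri, li⟩
        (fun r : Fin K => G n x η φ k r.1 (jj (vtx k (r.castSucc : Fin (K+1)).1))
          (jj (vtx k (r.succ : Fin (K+1)).1)))
        (fun ℓ => Real.exp (-‖x ℓ (jj ℓ) - x (ℓ + 1) (jj (ℓ + 1))‖ ^ 2 / η) * φ ℓ (jj ℓ))
        (fun r => rfl)).symm
    · rw [if_neg hc, if_neg hc, zero_mul]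
  rw [step1, L1 n x η φ k i K (Fin.cast (congrArg n hK0.symm) i)]
  have h4 : CM.A n x η φ k i K (Fin.cast (congrArg n hK0.symm) i)
      = ∑ c, CM.A n x η φ k i K c * CM.B n x η φ k i 0 K c := by
    have hB : ∀ c : Fin (n (vtx k K)),
        CM.B n x η φ k i 0 K c = if c = Fin.cast (congrArg n hK0.symm) i then 1 else 0 := by
      intro c
      show (if h : vtx k K = k then (if Fin.cast (congrArg n h) c = i then (1:ℝ) else 0)
        else 0) = _
      rw [dif_pos hK0]
      congr 1
      simp only [eq_iff_iff]
      constructor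
      · intro h; apply Fin.ext
        have := congrArg Fin.val h
        simpa using this
      · intro h; subst h; apply Fin.ext; simp
    simp only [hB, mul_ite, mul_one, mul_zero, Finset.sum_ite_eq', Finset.mem_univ, if_true]
  rw [h4, ← Qiter n x η φ k i (K-1) 1 (by omega)]
  have hA1 : ∀ c : Fin (n (vtx k 1)), CM.A n x η φ k i 1 c = G n x η φ k 0 i c := by
    intro c
    show (∑ a, (if a = i then (1:ℝ) else 0) * G n x η φ k 0 a c) = _
    simp
  have hB1 := B1 n x η φ k i α hα1 hα2 (K-1) 1 (by omega) (by omega) (by omega)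
  rw [show (∑ c, CM.A n x η φ k i 1 c * CM.B n x η φ k i (K-1) 1 c)
      = ∑ c, G n x η φ k 0 i c * (φ (vtx k 1) c * α (vtx k 1) k c i) from
    Finset.sum_congr rfl fun c _ => by rw [hA1 c, hB1 c]]
  rw [Finset.mul_sum]
  refine Finset.sum_congr rfl fun c _ => ?_
  show (Real.exp (-‖x k i - x (k + 1) c‖ ^ 2 / η) * φ k i)
      * (φ (k + 1) c * α (k + 1) k c i)
    = φ k i * (Real.exp (-‖x k i - x (k + 1) c‖ ^ 2 / η) * φ (k + 1) c * α (k + 1) k c i)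
  ring
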